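/- Let n ≥ 1 be an integer. Then there exists a ℂ-linear automorphism g of ℂ × ℂ^n × ℂ^n with det g = 1 and B(g(x), g(y)) = B(x,y) for all x, y, such that the subspace W := H ∩ g(H), where H := {0} × ℂ^n × ℂ^n, satisfies dim W = 2n−1 and W ∩ W^⊥ = {0}, where W^⊥ = {x : B(x,w) = 0 for all w ∈ W}. -/

import Mathlib

/-- The symmetric bilinear form on `ℂ × ℂ^n × ℂ^n ≅ ℂ^{2n+1}`:
`B((u,z,w),(u',z',w')) = u·u' + ∑ᵢ (zᵢ w'ᵢ + wᵢ z'ᵢ)`, the polar form of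
`q(u,z,w) = u² + 2⟨z,w⟩`. -/
noncomputable def oddForm (n : ℕ) (x y : ℂ × (Fin n → ℂ) × (Fin n → ℂ)) : ℂ :=
  x.1 * y.1 + ∑ i, (x.2.1 i * y.2.2 i + x.2.2 i * y.2.1 i)

/-- The hyperplane `H = {0} × ℂ^n × ℂ^n` of `ℂ × ℂ^n × ℂ^n`. -/
noncomputable def oddH (n : ℕ) : Submodule ℂ (ℂ × (Fin n → ℂ) × (Fin n → ℂ)) :=
  Submodule.prod (⊥ : Submodule ℂ ℂ)
    (Submodule.prod (⊤ : Submodule ℂ (Fin n → ℂ)) (⊤ : Submodule ℂ (Fin n → ℂ)))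

/-- Shear isometry of type A (Eichler transvection with isotropic direction `e₊`). -/
noncomputable def shA (n : ℕ) (i0 : Fin n) (t : ℂ) :
    (ℂ × (Fin n → ℂ) × (Fin n → ℂ)) →ₗ[ℂ] (ℂ × (Fin n → ℂ) × (Fin n → ℂ)) where
  toFun x := (x.1 + t * x.2.2 i0,
    fun j => if j = i0 then x.2.1 i0 - t * x.1 - t^2/2 * x.2.2 i0 else x.2.1 j,
    x.2.2)
  map_add' x y := by
    refine Prod.ext (by simp; ring) (Prod.ext (funext fun j => ?_) rfl)
    by_cases h : j = i0 <;> simp [h] <;> ring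
  map_smul' c x := by
    refine Prod.ext (by simp; ring) (Prod.ext (funext fun j => ?_) rfl)
    by_cases h : j = i0 <;> simp [h] <;> ring

/-- Shear isometry of type B (Eichler transvection with isotropic direction `e₋`). -/
noncomputable def shB (n : ℕ) (i0 : Fin n) (t : ℂ) :
    (ℂ × (Fin n → ℂ) × (Fin n → ℂ)) →ₗ[ℂ] (ℂ × (Fin n → ℂ) × (Fin n → ℂ)) where
  toFun x := (x.1 + t * x.2.1 i0,
    x.2.1,
    fun j => if j = i0 then x.2.2 i0 - t * x.1 - t^2/2 * x.2.1 i0 else x.2.2 j)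
  map_add' x y := by
    refine Prod.ext (by simp; ring) (Prod.ext rfl (funext fun j => ?_))
    by_cases h : j = i0 <;> simp [h] <;> ring
  map_smul' c x := by
    refine Prod.ext (by simp; ring) (Prod.ext rfl (funext fun j => ?_))
    by_cases h : j = i0 <;> simp [h] <;> ring

lemma oddForm_split (n : ℕ) (i0 : Fin n) (x y : ℂ × (Fin n → ℂ) × (Fin n → ℂ)) :
    oddForm n x y = (x.1 * y.1 + (x.2.1 i0 * y.2.2 i0 + x.2.2 i0 * y.2.1 i0)) +
      ∑ i ∈ {i0}ᶜ, (x.2.1 i * y.2.2 i + x.2.2 i * y.2.1 i) := by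
  unfold oddForm
  rw [Fintype.sum_eq_add_sum_compl i0]
  ring

lemma oddForm_shA (n : ℕ) (i0 : Fin n) (t : ℂ) (x y : ℂ × (Fin n → ℂ) × (Fin n → ℂ)) :
    oddForm n (shA n i0 t x) (shA n i0 t y) = oddForm n x y := by
  rw [oddForm_split n i0, oddForm_split n i0 x y]
  have hs : ∑ i ∈ {i0}ᶜ, ((shA n i0 t x).2.1 i * (shA n i0 t y).2.2 i +
      (shA n i0 t x).2.2 i * (shA n i0 t y).2.1 i) =
      ∑ i ∈ {i0}ᶜ, (x.2.1 i * y.2.2 i + x.2.2 i * y.2.1 i) := by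
    refine Finset.sum_congr rfl fun i hi => ?_
    have h : i ≠ i0 := by simpa using hi
    simp [shA, h]
  rw [hs]
  simp [shA]
  ring

lemma oddForm_shB (n : ℕ) (i0 : Fin n) (t : ℂ) (x y : ℂ × (Fin n → ℂ) × (Fin n → ℂ)) :
    oddForm n (shB n i0 t x) (shB n i0 t y) = oddForm n x y := by
  rw [oddForm_split n i0, oddForm_split n i0 x y]
  have hs : ∑ i ∈ {i0}ᶜ, ((shB n i0 t x).2.1 i * (shB n i0 t y).2.2 i +
      (shB n i0 t x).2.2 i * (shB n i0 t y).2.1 i) =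
      ∑ i ∈ {i0}ᶜ, (x.2.1 i * y.2.2 i + x.2.2 i * y.2.1 i) := by
    refine Finset.sum_congr rfl fun i hi => ?_
    have h : i ≠ i0 := by simpa using hi
    simp [shB, h]
  rw [hs]
  simp [shB]
  ring

lemma shA_cancel (n : ℕ) (i0 : Fin n) (t : ℂ) (x : ℂ × (Fin n → ℂ) × (Fin n → ℂ)) :
    shA n i0 t (shA n i0 (-t) x) = x := by
  refine Prod.ext ?_ (Prod.ext (funext fun j => ?_) rfl)
  · simp [shA]; try ring
  · by_cases h : j = i0 <;> simp [shA, h] <;> try ring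

lemma shB_cancel (n : ℕ) (i0 : Fin n) (t : ℂ) (x : ℂ × (Fin n → ℂ) × (Fin n → ℂ)) :
    shB n i0 t (shB n i0 (-t) x) = x := by
  refine Prod.ext ?_ (Prod.ext rfl (funext fun j => ?_))
  · simp [shB]; try ring
  · by_cases h : j = i0 <;> simp [shB, h] <;> try ring

/-- The commutator `T' T T'⁻¹ T⁻¹` of the two shears: an isometry with determinant 1. -/
noncomputable def gmap (n : ℕ) (i0 : Fin n) :
    (ℂ × (Fin n → ℂ) × (Fin n → ℂ)) →ₗ[ℂ] (ℂ × (Fin n → ℂ) × (Fin n → ℂ)) :=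
  shB n i0 1 ∘ₗ shA n i0 1 ∘ₗ shB n i0 (-1) ∘ₗ shA n i0 (-1)

noncomputable def ginv (n : ℕ) (i0 : Fin n) :
    (ℂ × (Fin n → ℂ) × (Fin n → ℂ)) →ₗ[ℂ] (ℂ × (Fin n → ℂ) × (Fin n → ℂ)) :=
  shA n i0 1 ∘ₗ shB n i0 1 ∘ₗ shA n i0 (-1) ∘ₗ shB n i0 (-1)

lemma shA_cancel' (n : ℕ) (i0 : Fin n) (t : ℂ) (x : ℂ × (Fin n → ℂ) × (Fin n → ℂ)) :
    shA n i0 (-t) (shA n i0 t x) = x := by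
  have := shA_cancel n i0 (-t) x; rwa [neg_neg] at this

lemma shB_cancel' (n : ℕ) (i0 : Fin n) (t : ℂ) (x : ℂ × (Fin n → ℂ) × (Fin n → ℂ)) :
    shB n i0 (-t) (shB n i0 t x) = x := by
  have := shB_cancel n i0 (-t) x; rwa [neg_neg] at this

lemma gmap_ginv (n : ℕ) (i0 : Fin n) (x : ℂ × (Fin n → ℂ) × (Fin n → ℂ)) :
    gmap n i0 (ginv n i0 x) = x := by
  simp only [gmap, ginv, LinearMap.comp_apply]
  rw [shA_cancel' n i0 1, shB_cancel' n i0 1, shA_cancel n i0 1, shB_cancel n i0 1]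

lemma ginv_gmap (n : ℕ) (i0 : Fin n) (x : ℂ × (Fin n → ℂ) × (Fin n → ℂ)) :
    ginv n i0 (gmap n i0 x) = x := by
  simp only [gmap, ginv, LinearMap.comp_apply]
  rw [shB_cancel' n i0 1, shA_cancel' n i0 1, shB_cancel n i0 1, shA_cancel n i0 1]

lemma ginv_fst (n : ℕ) (i0 : Fin n) (x : ℂ × (Fin n → ℂ) × (Fin n → ℂ)) :
    (ginv n i0 x).1 = (5/4) * x.1 - (3/8) * x.2.1 i0 + (3/4) * x.2.2 i0 := by
  simp [ginv, shA, shB]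
  ring

lemma mem_W (n : ℕ) (i0 : Fin n) (x : ℂ × (Fin n → ℂ) × (Fin n → ℂ)) :
    x ∈ oddH n ⊓ (oddH n).map (gmap n i0) ↔ x.1 = 0 ∧ (ginv n i0 x).1 = 0 := by
  simp only [Submodule.mem_inf, Submodule.mem_map, oddH, Submodule.mem_prod,
    Submodule.mem_bot, Submodule.mem_top, and_true]
  constructor
  · rintro ⟨h1, y, hy, rfl⟩
    exact ⟨h1, by rw [ginv_gmap]; exact hy⟩
  · rintro ⟨h1, h2⟩
    exact ⟨h1, ginv n i0 x, h2, gmap_ginv n i0 x⟩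

theorem exists_generic_isometry' (n : ℕ) (hn : 1 ≤ n) :
    ∃ g : (ℂ × (Fin n → ℂ) × (Fin n → ℂ)) →ₗ[ℂ] (ℂ × (Fin n → ℂ) × (Fin n → ℂ)),
      LinearMap.det g = 1 ∧
      (∀ x y, oddForm n (g x) (g y) = oddForm n x y) ∧
      Module.finrank ℂ ↥(oddH n ⊓ (oddH n).map g) = 2*n - 1 ∧
      (∀ x ∈ oddH n ⊓ (oddH n).map g,
        (∀ w ∈ oddH n ⊓ (oddH n).map g, oddForm n x w = 0) → x = 0) := by
  set i0 : Fin n := ⟨0, hn⟩ with hi0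
  refine ⟨gmap n i0, ?_, ?_, ?_, ?_⟩
  · -- determinant
    have hdet : ∀ (f h : (ℂ × (Fin n → ℂ) × (Fin n → ℂ)) →ₗ[ℂ] (ℂ × (Fin n → ℂ) × (Fin n → ℂ))),
        (∀ x, f (h x) = x) → LinearMap.det f * LinearMap.det h = 1 := by
      intro f h H
      have hfh : f ∘ₗ h = LinearMap.id := LinearMap.ext fun x => by simpa using H x
      rw [← LinearMap.det_comp, hfh, LinearMap.det_id]
    have ha := hdet (shA n i0 1) (shA n i0 (-1)) (fun x => shA_cancel n i0 1 x)
    have hb := hdet (shB n i0 1) (shB n i0 (-1)) (fun x => shB_cancel n i0 1 x)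
    have hg : LinearMap.det (gmap n i0) =
        (LinearMap.det (shB n i0 1) * LinearMap.det (shB n i0 (-1))) *
        (LinearMap.det (shA n i0 1) * LinearMap.det (shA n i0 (-1))) := by
      simp only [gmap, LinearMap.det_comp]; ring
    rw [hg, ha, hb, mul_one]
  · -- isometry
    intro x y
    simp only [gmap, LinearMap.comp_apply]
    rw [oddForm_shB, oddForm_shA, oddForm_shB, oddForm_shA]
  · -- finrank
    set Φ : (ℂ × (Fin n → ℂ) × (Fin n → ℂ)) →ₗ[ℂ] ℂ × ℂ :=
      LinearMap.prod (LinearMap.fst ℂ ℂ _) ((LinearMap.fst ℂ ℂ _) ∘ₗ ginv n i0) with hΦ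
    have hW : oddH n ⊓ (oddH n).map (gmap n i0) = LinearMap.ker Φ := by
      ext x
      rw [mem_W]
      simp [hΦ, LinearMap.mem_ker, LinearMap.prod_apply, Pi.prod, Prod.ext_iff]
    have e1 : Φ ((1 : ℂ), fun j => if j = i0 then (10/3 : ℂ) else 0, (0 : Fin n → ℂ)) =
        ((1 : ℂ), (0 : ℂ)) := by
      simp only [hΦ, LinearMap.prod_apply, Function.prod, LinearMap.fst_apply, LinearMap.comp_apply,
        ginv_fst, if_pos rfl, Pi.zero_apply, Prod.mk.injEq]
      norm_num
    have e2 : Φ ((0 : ℂ), (0 : Fin n → ℂ), fun j => if j = i0 then (4/3 : ℂ) else 0) =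
        ((0 : ℂ), (1 : ℂ)) := by
      simp only [hΦ, LinearMap.prod_apply, Function.prod, LinearMap.fst_apply, LinearMap.comp_apply,
        ginv_fst, if_pos rfl, Pi.zero_apply, Prod.mk.injEq]
      norm_num
    have hr : LinearMap.range Φ = ⊤ := by
      rw [LinearMap.range_eq_top]
      intro p
      refine ⟨p.1 • ((1 : ℂ), fun j => if j = i0 then (10/3 : ℂ) else 0, (0 : Fin n → ℂ)) +
        p.2 • ((0 : ℂ), (0 : Fin n → ℂ), fun j => if j = i0 then (4/3 : ℂ) else 0), ?_⟩
      rw [map_add, map_smul, map_smul, e1, e2]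
      simp [Prod.ext_iff, smul_eq_mul]
    have key := LinearMap.finrank_range_add_finrank_ker Φ
    rw [hr, finrank_top] at key
    have h2 : Module.finrank ℂ (ℂ × ℂ) = 2 := by simp [Module.finrank_prod]
    have hV : Module.finrank ℂ (ℂ × (Fin n → ℂ) × (Fin n → ℂ)) = 2 * n + 1 := by
      simp [Module.finrank_prod, Module.finrank_pi]; ring
    rw [h2, hV] at key
    rw [hW]
    omega
  · -- nondegeneracy
    intro x hx h
    rw [mem_W] at hx
    obtain ⟨hx1, hx2⟩ := hx
    rw [ginv_fst, hx1] at hx2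
    have ht : ((0 : ℂ), fun j => if j = i0 then (2:ℂ) else 0,
        fun j => if j = i0 then (1:ℂ) else 0) ∈ oddH n ⊓ (oddH n).map (gmap n i0) := by
      rw [mem_W, ginv_fst]
      norm_num
    have hsum : oddForm n x ((0 : ℂ), fun j => if j = i0 then (2:ℂ) else 0,
        fun j => if j = i0 then (1:ℂ) else 0) = x.2.1 i0 + 2 * x.2.2 i0 := by
      simp [oddForm, mul_ite, Finset.sum_add_distrib, Finset.sum_ite_eq']
      ring
    have h0 := h _ ht
    rw [hsum] at h0
    have hw0 : x.2.2 i0 = 0 := by linear_combination (1/4 : ℂ) * h0 + (2/3 : ℂ) * hx2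
    have hz0 : x.2.1 i0 = 0 := by linear_combination h0 - 2 * hw0
    have hzj : ∀ j, j ≠ i0 → x.2.1 j = 0 := by
      intro j hj
      have htj : ((0 : ℂ), (0 : Fin n → ℂ), fun k => if k = j then (1:ℂ) else 0) ∈
          oddH n ⊓ (oddH n).map (gmap n i0) := by
        rw [mem_W, ginv_fst]
        simp [hj, Ne.symm hj]
      have hsj : oddForm n x ((0 : ℂ), (0 : Fin n → ℂ), fun k => if k = j then (1:ℂ) else 0)
          = x.2.1 j := by
        simp [oddForm, mul_ite, Finset.sum_ite_eq']
      have := h _ htj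
      rwa [hsj] at this
    have hwj : ∀ j, j ≠ i0 → x.2.2 j = 0 := by
      intro j hj
      have htj : ((0 : ℂ), fun k => if k = j then (1:ℂ) else 0, (0 : Fin n → ℂ)) ∈
          oddH n ⊓ (oddH n).map (gmap n i0) := by
        rw [mem_W, ginv_fst]
        simp [hj, Ne.symm hj]
      have hsj : oddForm n x ((0 : ℂ), fun k => if k = j then (1:ℂ) else 0, (0 : Fin n → ℂ))
          = x.2.2 j := by
        simp [oddForm, mul_ite, Finset.sum_ite_eq']
      have := h _ htj
      rwa [hsj] at this
    refine Prod.ext hx1 (Prod.ext (funext fun j => ?_) (funext fun j => ?_))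
    · by_cases hj : j = i0
      · simpa [hj] using hz0
      · simpa using hzj j hj
    · by_cases hj : j = i0
      · simpa [hj] using hw0
      · simpa using hwj j hj

/-- Genericity claim of Section 4.4: there is a linear automorphism `g` of
`ℂ × ℂ^n × ℂ^n` with `det g = 1` preserving `B` such that `W := H ∩ g(H)` has dimension
`2n−1` and `W ∩ W^⊥ = {0}`. -/
theorem exists_generic_isometry (n : ℕ) (hn : 1 ≤ n) :
    ∃ g : (ℂ × (Fin n → ℂ) × (Fin n → ℂ)) →ₗ[ℂ] (ℂ × (Fin n → ℂ) × (Fin n → ℂ)),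
      LinearMap.det g = 1 ∧
      (∀ x y, oddForm n (g x) (g y) = oddForm n x y) ∧
      Module.finrank ℂ ↥(oddH n ⊓ (oddH n).map g) = 2*n - 1 ∧
      (∀ x ∈ oddH n ⊓ (oddH n).map g,
        (∀ w ∈ oddH n ⊓ (oddH n).map g, oddForm n x w = 0) → x = 0) := by
  exact exists_generic_isometry' n hn
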